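/- The probabilistic bisector of two equi-range circular objects is unaffected by the presence of a third object: let o₁ = B̄(c₁,r), o₂ = B̄(c₂,r) be closed disks of equal radius r > 0 with distinct centers c₁ ≠ c₂ in the plane, and let o₃ = B̄(c₃,r₃) be any further closed disk with r₃ > 0, the three objects modeled by the triple product measure U(c₁,r) ⊗ U(c₂,r) ⊗ U(c₃,r₃). Then for every point x with dist(x,c₁) = dist(x,c₂), the probability that o₁ is strictly the nearest of the three objects to x equals the probability that o₂ is strictly the nearest of the three objects to x; that is, the product measure of {(u,v,w) | dist(u,x) < dist(v,x) and dist(u,x) < dist(w,x)} equals the product measure of {(u,v,w) | dist(v,x) < dist(u,x) and dist(v,x) < dist(w,x)}. -/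

import Mathlib

open MeasureTheory
open scoped ENNReal

/-- Abbreviation for the Euclidean plane, used in the proof below. -/
abbrev Epl : Type := EuclideanSpace ℝ (Fin 2)

/-- The uniform probability measure on the closed ball of center `c` and radius `r`
in the Euclidean plane. -/
noncomputable def unifBall (c : EuclideanSpace ℝ (Fin 2)) (r : ℝ) :
    Measure (EuclideanSpace ℝ (Fin 2)) :=
  (volume (Metric.closedBall c r))⁻¹ • volume.restrict (Metric.closedBall c r)

theorem prob_bisector_equi_range_disks_unaffected_by_third_object
    (c₁ c₂ c₃ : EuclideanSpace ℝ (Fin 2)) (r r₃ : ℝ)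
    (hr : 0 < r) (hr₃ : 0 < r₃) (hc : c₁ ≠ c₂)
    (x : EuclideanSpace ℝ (Fin 2)) (hx : dist x c₁ = dist x c₂) :
    ((unifBall c₁ r).prod ((unifBall c₂ r).prod (unifBall c₃ r₃)))
        {p : EuclideanSpace ℝ (Fin 2) ×
            (EuclideanSpace ℝ (Fin 2) × EuclideanSpace ℝ (Fin 2)) |
          dist p.1 x < dist p.2.1 x ∧ dist p.1 x < dist p.2.2 x}
      = ((unifBall c₁ r).prod ((unifBall c₂ r).prod (unifBall c₃ r₃)))
          {p : EuclideanSpace ℝ (Fin 2) ×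
              (EuclideanSpace ℝ (Fin 2) × EuclideanSpace ℝ (Fin 2)) |
            dist p.2.1 x < dist p.1 x ∧ dist p.2.1 x < dist p.2.2 x} := by
  haveI : Nonempty (AffineSubspace.perpBisector c₁ c₂) :=
    ⟨⟨_, AffineSubspace.midpoint_mem_perpBisector c₁ c₂⟩⟩
  set σ : Epl ≃ᵃⁱ[ℝ] Epl :=
    EuclideanGeometry.reflection (AffineSubspace.perpBisector c₁ c₂) with hσdef
  -- σ fixes x
  have hσx : σ x = x :=
    (EuclideanGeometry.reflection_eq_self_iff x).2
      (AffineSubspace.mem_perpBisector_iff_dist_eq.2 hx)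
  -- σ maps c₁ to c₂
  have hproj : (EuclideanGeometry.orthogonalProjection
      (AffineSubspace.perpBisector c₁ c₂) c₁ : Epl) = midpoint ℝ c₁ c₂ := by
    have hm2 : midpoint ℝ c₁ c₂ ∈
        AffineSubspace.mk' c₁ (AffineSubspace.perpBisector c₁ c₂).directionᗮ := by
      rw [AffineSubspace.mem_mk', AffineSubspace.direction_perpBisector,
        Submodule.orthogonal_orthogonal, midpoint_vsub_left]
      exact Submodule.smul_mem _ _ (Submodule.mem_span_singleton_self _)
    have h1 : midpoint ℝ c₁ c₂ ∈ ((AffineSubspace.perpBisector c₁ c₂ : Set Epl)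
        ∩ AffineSubspace.mk' c₁ (AffineSubspace.perpBisector c₁ c₂).directionᗮ) :=
      ⟨AffineSubspace.midpoint_mem_perpBisector _ _, hm2⟩
    rw [EuclideanGeometry.inter_eq_singleton_orthogonalProjection c₁] at h1
    exact h1.symm
  have hσc₁ : σ c₁ = c₂ := by
    rw [hσdef, EuclideanGeometry.reflection_apply', hproj,
      ← Equiv.pointReflection_apply]
    exact Equiv.pointReflection_midpoint_left c₁ c₂
  have hσc₂ : σ c₂ = c₁ := by
    conv_lhs => rw [← hσc₁]
    exact EuclideanGeometry.reflection_reflection _ c₁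
  -- σ is measure preserving on volume
  have hmpv : MeasurePreserving σ (volume : Measure Epl) volume := by
    have h0 : (⇑σ : Epl → Epl) = (fun y => y + σ 0) ∘ ⇑σ.linearIsometryEquiv := by
      funext y
      have := σ.map_vadd 0 y
      simpa [vadd_eq_add] using this
    rw [h0]
    exact (measurePreserving_add_right volume (σ 0)).comp
      σ.linearIsometryEquiv.measurePreserving
  -- preimages of the balls
  have hpre12 : ⇑σ ⁻¹' Metric.closedBall c₂ r = Metric.closedBall c₁ r := by
    ext p
    simp only [Set.mem_preimage, Metric.mem_closedBall]
    rw [← hσc₁, σ.dist_map]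
  have hpre21 : ⇑σ ⁻¹' Metric.closedBall c₁ r = Metric.closedBall c₂ r := by
    ext p
    simp only [Set.mem_preimage, Metric.mem_closedBall]
    rw [← hσc₂, σ.dist_map]
  have hvol : volume (Metric.closedBall c₁ r) = volume (Metric.closedBall c₂ r) := by
    rw [← hpre12]
    exact hmpv.measure_preimage measurableSet_closedBall.nullMeasurableSet
  -- maps of the uniform measures
  have hmap12 : Measure.map σ (unifBall c₁ r) = unifBall c₂ r := by
    rw [unifBall, unifBall, Measure.map_smul, ← hpre12,
      ← Measure.restrict_map hmpv.measurable measurableSet_closedBall, hmpv.map_eq,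
      hpre12, hvol]
  have hmap21 : Measure.map σ (unifBall c₂ r) = unifBall c₁ r := by
    rw [unifBall, unifBall, Measure.map_smul, ← hpre21,
      ← Measure.restrict_map hmpv.measurable measurableSet_closedBall, hmpv.map_eq,
      hpre21, ← hvol]
  -- probability measures
  have hprob : ∀ (c : Epl) (ρ : ℝ), 0 < ρ → IsProbabilityMeasure (unifBall c ρ) := by
    intro c ρ hρ
    constructor
    rw [unifBall, Measure.smul_apply, Measure.restrict_apply_univ, smul_eq_mul]
    exact ENNReal.inv_mul_cancel (Metric.measure_closedBall_pos volume c hρ).ne'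
      measure_closedBall_lt_top.ne
  haveI h1p := hprob c₁ r hr
  haveI h2p := hprob c₂ r hr
  haveI h3p := hprob c₃ r₃ hr₃
  set μ₁ := unifBall c₁ r
  set μ₂ := unifBall c₂ r
  set μ₃ := unifBall c₃ r₃
  -- the measure preserving transformation
  have hmp1 : MeasurePreserving σ μ₁ μ₂ := ⟨hmpv.measurable, hmap12⟩
  have hmp2 : MeasurePreserving σ μ₂ μ₁ := ⟨hmpv.measurable, hmap21⟩
  set T : Epl × Epl × Epl → Epl × Epl × Epl := fun p => (σ p.2.1, σ p.1, p.2.2) with hT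
  have hTmp : MeasurePreserving T (μ₁.prod (μ₂.prod μ₃)) (μ₁.prod (μ₂.prod μ₃)) := by
    have h1 : MeasurePreserving
        (MeasurableEquiv.prodAssoc.symm : Epl × Epl × Epl ≃ᵐ (Epl × Epl) × Epl)
        (μ₁.prod (μ₂.prod μ₃)) ((μ₁.prod μ₂).prod μ₃) :=
      (measurePreserving_prodAssoc μ₁ μ₂ μ₃).symm MeasurableEquiv.prodAssoc
    have h2 : MeasurePreserving
        (Prod.map (Prod.swap : Epl × Epl → Epl × Epl) (id : Epl → Epl))
        ((μ₁.prod μ₂).prod μ₃) ((μ₂.prod μ₁).prod μ₃) :=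
      MeasurePreserving.prod Measure.measurePreserving_swap (MeasurePreserving.id μ₃)
    have h3 : MeasurePreserving (MeasurableEquiv.prodAssoc : (Epl × Epl) × Epl ≃ᵐ Epl × Epl × Epl)
        ((μ₂.prod μ₁).prod μ₃) (μ₂.prod (μ₁.prod μ₃)) :=
      measurePreserving_prodAssoc μ₂ μ₁ μ₃
    have h4 : MeasurePreserving (Prod.map (⇑σ) (Prod.map (⇑σ) (id : Epl → Epl)))
        (μ₂.prod (μ₁.prod μ₃)) (μ₁.prod (μ₂.prod μ₃)) :=
      hmp2.prod (hmp1.prod (MeasurePreserving.id μ₃))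
    have hTeq : T = (Prod.map (⇑σ) (Prod.map (⇑σ) (id : Epl → Epl))) ∘
        (MeasurableEquiv.prodAssoc : (Epl × Epl) × Epl ≃ᵐ Epl × Epl × Epl) ∘
        (Prod.map (Prod.swap : Epl × Epl → Epl × Epl) (id : Epl → Epl)) ∘
        (MeasurableEquiv.prodAssoc.symm : Epl × Epl × Epl ≃ᵐ (Epl × Epl) × Epl) := rfl
    rw [hTeq]
    exact ((h4.comp h3).comp h2).comp h1
  -- measurability of the event
  have m1 : Measurable fun p : Epl × Epl × Epl => dist p.1 x :=
    measurable_fst.dist measurable_const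
  have m2 : Measurable fun p : Epl × Epl × Epl => dist p.2.1 x :=
    (measurable_fst.comp measurable_snd).dist measurable_const
  have m3 : Measurable fun p : Epl × Epl × Epl => dist p.2.2 x :=
    (measurable_snd.comp measurable_snd).dist measurable_const
  have hA : MeasurableSet {p : Epl × Epl × Epl |
      dist p.1 x < dist p.2.1 x ∧ dist p.1 x < dist p.2.2 x} :=
    (measurableSet_lt m1 m2).inter (measurableSet_lt m1 m3)
  have hpreT : T ⁻¹' {p : Epl × Epl × Epl |
      dist p.1 x < dist p.2.1 x ∧ dist p.1 x < dist p.2.2 x}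
      = {p : Epl × Epl × Epl |
      dist p.2.1 x < dist p.1 x ∧ dist p.2.1 x < dist p.2.2 x} := by
    ext p
    simp only [Set.mem_preimage, Set.mem_setOf_eq, hT]
    have hd : ∀ y : Epl, dist (σ y) x = dist y x := fun y => by
      rw [← σ.dist_map y x, hσx]
    rw [hd, hd]
  calc (μ₁.prod (μ₂.prod μ₃)) {p : Epl × Epl × Epl |
        dist p.1 x < dist p.2.1 x ∧ dist p.1 x < dist p.2.2 x}
      = (μ₁.prod (μ₂.prod μ₃)) (T ⁻¹' {p : Epl × Epl × Epl |
        dist p.1 x < dist p.2.1 x ∧ dist p.1 x < dist p.2.2 x}) :=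
        (hTmp.measure_preimage hA.nullMeasurableSet).symm
    _ = _ := by rw [hpreT]
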